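/- Under the standing construction, assume additionally that there are continuous linear functionals V_n* : X → ℝ with ‖V_n*‖ ≤ 1 and V_n*(v_m) = δ_{nm} for all n,m. Let u : [0,1) → X be u(t) := Σ_{n=1}^∞ z_n(t) v_n and set σ_n := (t_n + t_{n+1})/2. Then u(σ_n) = v₁ + v_n for every n ≥ 2, ‖u(σ_n) − u(σ_m)‖ = ‖v_n − v_m‖ ≥ 1 for all n ≠ m with n,m ≥ 2, the limit lim_{t→1⁻} u(t) does not exist, and there is no continuous function v : [0,1] → X with v(t) = u(t) for all t ∈ [0,1). -/

import Mathlib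

open Set Filter

/-- Under the standing construction with biorthogonal functionals, `u(σ_n) = v₁ + v_n`
for `σ_n = (t_n + t_{n+1})/2` and `n ≥ 2`, `‖u(σ_n) - u(σ_m)‖ = ‖v_n - v_m‖ ≥ 1` for
`n ≠ m`, the limit of `u(t)` as `t → 1⁻` does not exist, and `u` has no continuous
extension to `[0,1]`. -/
theorem standing_construction_no_extension
    (α : ℝ) (hα : α ∈ Set.Ioo (0 : ℝ) 1)
    (X : Type*) [NormedAddCommGroup X] [NormedSpace ℝ X] [CompleteSpace X]
    (t : ℕ → ℝ) (z : ℕ → ℝ → ℝ) (v : ℕ → X) (V : ℕ → X →L[ℝ] ℝ)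
    (ht_mem : ∀ n, 1 ≤ n → t n ∈ Set.Ioo (0 : ℝ) 1)
    (ht_mono : ∀ n, 1 ≤ n → t n < t (n + 1))
    (ht_lim : Filter.Tendsto t Filter.atTop (nhds 1))
    (ht_step : ∀ n, 2 ≤ n → t (n + 1) - t n < t n - t (n - 1))
    (hz1 : ∀ s : ℝ, z 1 s = 1)
    (hz_smooth : ∀ n, 2 ≤ n → ContDiff ℝ 1 (z n))
    (hz_one : ∀ n, 2 ≤ n → ∀ s ∈ Set.Icc (t n) (t (n + 1)), z n s = 1)
    (hz_mid : ∀ n, 2 ≤ n → ∀ s ∈ Set.Ioo ((t (n - 1) + t n) / 2) (t n) ∪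
        Set.Ioo (t (n + 1)) ((t (n + 1) + t (n + 2)) / 2),
      0 < z n s ∧ z n s < 1)
    (hz_zero : ∀ n, 2 ≤ n → ∀ s : ℝ,
      s ∉ Set.Ioo ((t (n - 1) + t n) / 2) ((t (n + 1) + t (n + 2)) / 2) → z n s = 0)
    (hz_deriv_nonneg : ∀ n, 2 ≤ n →
      ∀ s ∈ Set.Icc ((t (n - 1) + t n) / 2) (t n), 0 ≤ deriv (z n) s)
    (hz_deriv_nonpos : ∀ n, 2 ≤ n →
      ∀ s ∈ Set.Icc (t (n + 1)) ((t (n + 1) + t (n + 2)) / 2), deriv (z n) s ≤ 0)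
    (hv : ∀ n, 1 ≤ n → ‖v n‖ = 1)
    (hV_norm : ∀ n, 1 ≤ n → ‖V n‖ ≤ 1)
    (hV_biorth : ∀ n m, 1 ≤ n → 1 ≤ m → V n (v m) = if n = m then 1 else 0) :
    ∀ u : ℝ → X, (∀ s : ℝ, u s = ∑' n : ℕ, z (n + 1) s • v (n + 1)) →
      (∀ n, 2 ≤ n → u ((t n + t (n + 1)) / 2) = v 1 + v n) ∧
      (∀ n m, 2 ≤ n → 2 ≤ m → n ≠ m →
        ‖u ((t n + t (n + 1)) / 2) - u ((t m + t (m + 1)) / 2)‖ = ‖v n - v m‖ ∧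
        1 ≤ ‖v n - v m‖) ∧
      (¬ ∃ L : X, Filter.Tendsto u (nhdsWithin 1 (Set.Iio 1)) (nhds L)) ∧
      (¬ ∃ w : ℝ → X, ContinuousOn w (Set.Icc 0 1) ∧
        ∀ s ∈ Set.Ico (0 : ℝ) 1, w s = u s) := by
  intro u hu
  have tmono : ∀ a b, 1 ≤ a → a ≤ b → t a ≤ t b := by
    intro a b ha hab
    induction b with
    | zero => omega
    | succ b ih =>
      rcases Nat.lt_or_ge a (b + 1) with h | h
      · exact (ih (by omega)).trans (ht_mono b (by omega)).le
      · have : a = b + 1 := by omega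
        subst this; exact le_rfl
  have key : ∀ n, 2 ≤ n → u ((t n + t (n + 1)) / 2) = v 1 + v n := by
    intro n hn
    set σ := (t n + t (n + 1)) / 2 with hσ
    have hlt : t n < t (n + 1) := ht_mono n (by omega)
    have hσmem : σ ∈ Set.Icc (t n) (t (n + 1)) := ⟨by rw [hσ]; linarith, by rw [hσ]; linarith⟩
    have hzn : z n σ = 1 := hz_one n hn σ hσmem
    have hzero : ∀ k : ℕ, k + 1 ≠ 1 → k + 1 ≠ n → z (k + 1) σ = 0 := by
      intro k hk1 hkn
      have hm2 : 2 ≤ k + 1 := by omega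
      apply hz_zero (k + 1) hm2
      intro hmem
      have hk1sub : (k + 1 : ℕ) - 1 = k := by omega
      rw [hk1sub] at hmem
      rcases Nat.lt_or_ge (k + 1) n with h | h
      · -- k + 1 < n : right endpoint ≤ σ
        have h1 : t (k + 1 + 1) ≤ t n := tmono (k + 2) n (by omega) (by omega)
        have h2 : t (k + 1 + 2) ≤ t (n + 1) := tmono (k + 3) (n + 1) (by omega) (by omega)
        have := hmem.2
        rw [hσ] at this
        linarith
      · -- k + 1 > n : σ ≤ left endpoint
        have hgt : n < k + 1 := by omega
        have h1 : t n ≤ t k := tmono n k (by omega) (by omega)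
        have h2 : t (n + 1) ≤ t (k + 1) := tmono (n + 1) (k + 1) (by omega) (by omega)
        have := hmem.1
        rw [hσ] at this
        linarith
    rw [hu σ]
    have hsupp : ∀ j ∉ ({0, n - 1} : Finset ℕ), z (j + 1) σ • v (j + 1) = 0 := by
      intro j hj
      simp only [Finset.mem_insert, Finset.mem_singleton] at hj
      push_neg at hj
      rw [hzero j (by omega) (by omega), zero_smul]
    rw [tsum_eq_sum hsupp, Finset.sum_pair (by omega : (0 : ℕ) ≠ n - 1)]
    have hn1 : n - 1 + 1 = n := by omega
    rw [hn1]
    simp [hz1, hzn]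
  have part2 : ∀ n m, 2 ≤ n → 2 ≤ m → n ≠ m →
      ‖u ((t n + t (n + 1)) / 2) - u ((t m + t (m + 1)) / 2)‖ = ‖v n - v m‖ ∧
      1 ≤ ‖v n - v m‖ := by
    intro n m hn hm hnm
    constructor
    · rw [key n hn, key m hm, add_sub_add_left_eq_sub]
    · have happ : V n (v n - v m) = 1 := by
        rw [map_sub, hV_biorth n n (by omega) (by omega), hV_biorth n m (by omega) (by omega)]
        simp [hnm]
      have hop : ‖V n (v n - v m)‖ ≤ ‖V n‖ * ‖v n - v m‖ := (V n).le_opNorm _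
      rw [happ] at hop
      have h1 : ‖(1 : ℝ)‖ = 1 := by norm_num
      rw [h1] at hop
      have hVn : ‖V n‖ ≤ 1 := hV_norm n (by omega)
      nlinarith [norm_nonneg (v n - v m)]
  have noLim : ¬ ∃ L : X, Filter.Tendsto u (nhdsWithin 1 (Set.Iio 1)) (nhds L) := by
    rintro ⟨L, hL⟩
    set σ : ℕ → ℝ := fun n => (t n + t (n + 1)) / 2 with hσdef
    have hσlt : ∀ n, 1 ≤ n → σ n < 1 := by
      intro n hn
      have h1 := (ht_mem n hn).2
      have h2 := (ht_mem (n + 1) (by omega)).2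
      simp only [hσdef]
      linarith
    have hσtend : Filter.Tendsto σ Filter.atTop (nhds 1) := by
      have h2 : Filter.Tendsto (fun n => t (n + 1)) Filter.atTop (nhds 1) :=
        ht_lim.comp (tendsto_add_atTop_nat 1)
      have h3 := (ht_lim.add h2).div_const 2
      norm_num at h3
      exact h3
    have hσtend' : Filter.Tendsto (fun n => σ (n + 2)) Filter.atTop
        (nhdsWithin 1 (Set.Iio 1)) := by
      apply tendsto_nhdsWithin_of_tendsto_nhds_of_eventually_within
      · exact hσtend.comp (tendsto_add_atTop_nat 2)
      · exact Filter.Eventually.of_forall fun n => hσlt (n + 2) (by omega)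
    have hc : CauchySeq (fun n => u (σ (n + 2))) := (hL.comp hσtend').cauchySeq
    rw [Metric.cauchySeq_iff] at hc
    obtain ⟨N, hN⟩ := hc 1 one_pos
    have hd := hN N le_rfl (N + 1) (by omega)
    obtain ⟨heq, hge⟩ := part2 (N + 2) (N + 3) (by omega) (by omega) (by omega)
    rw [dist_eq_norm] at hd
    have : σ (N + 1 + 2) = (t (N + 3) + t (N + 3 + 1)) / 2 := by norm_num [hσdef]
    rw [this] at hd
    have : σ (N + 2) = (t (N + 2) + t (N + 2 + 1)) / 2 := rfl
    rw [this, heq] at hd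
    linarith
  refine ⟨key, part2, noLim, ?_⟩
  rintro ⟨w, hw, hwe⟩
  apply noLim
  refine ⟨w 1, ?_⟩
  have h1 : ContinuousWithinAt w (Set.Icc 0 1) 1 := hw 1 (by norm_num)
  have h2 : Filter.Tendsto w (nhdsWithin 1 (Set.Ico 0 1)) (nhds (w 1)) :=
    h1.mono_left (nhdsWithin_mono _ Set.Ico_subset_Icc_self)
  rw [nhdsWithin_Ico_eq_nhdsLT (by norm_num : (0 : ℝ) < 1)] at h2
  refine h2.congr' ?_
  have hpos : ∀ᶠ s : ℝ in nhdsWithin 1 (Set.Iio 1), (0 : ℝ) < s :=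
    eventually_nhdsWithin_of_eventually_nhds (eventually_gt_nhds (by norm_num))
  have hlt : ∀ᶠ s : ℝ in nhdsWithin 1 (Set.Iio 1), s ∈ Set.Iio (1 : ℝ) :=
    eventually_mem_nhdsWithin
  filter_upwards [hpos, hlt] with s hs1 hs2
  exact hwe s ⟨hs1.le, hs2⟩
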